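/- Let α and β be nonempty finite types and let ρ be a positive semidefinite complex matrix indexed by α × β with Tr(ρ) = 1. Let ρ_A(m,n) = ∑_{b} ρ((m,b),(n,b)) and ρ_B(b,b') = ∑_{m} ρ((m,b),(m,b')) be its partial traces. Then the real part of Tr(ρ · (ρ_A ⊗ₖ ρ_B)) is strictly positive. -/

import Mathlib

open Matrix
open scoped Kronecker ComplexOrder

namespace QPVAux

variable {α β : Type*} [Fintype α] [Fintype β] [DecidableEq α] [DecidableEq β]

open scoped MatrixOrder in
lemma posSemidef_iff_eq_transpose_mul_self {n : Type*} [Fintype n] [DecidableEq n] {A : Matrix n n ℂ} :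
    A.PosSemidef ↔ ∃ B : Matrix n n ℂ, A = Bᴴ * B := by
  refine ⟨fun h => ?_, fun ⟨B, hB⟩ => hB ▸ posSemidef_conjTranspose_mul_self B⟩
  obtain ⟨B, hB⟩ := CStarAlgebra.nonneg_iff_eq_star_mul_self.mp h.nonneg
  exact ⟨B, hB⟩

lemma mulVec_sumM {ι m n : Type*} [Fintype n] (s : Finset ι) (A : ι → Matrix m n ℂ)
    (v : n → ℂ) : (∑ i ∈ s, A i) *ᵥ v = ∑ i ∈ s, A i *ᵥ v := by
  ext j
  simp [mulVec, dotProduct, Matrix.sum_apply, Finset.sum_mul]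
  rw [Finset.sum_comm]

lemma mulVec_sumv {ι m n : Type*} [Fintype n] (A : Matrix m n ℂ) (s : Finset ι)
    (w : ι → n → ℂ) : A *ᵥ (∑ i ∈ s, w i) = ∑ i ∈ s, A *ᵥ w i := by
  ext j
  simp [mulVec, dotProduct, Finset.sum_apply, Finset.mul_sum]
  rw [Finset.sum_comm]

lemma dotProduct_sumv {ι n : Type*} [Fintype n] (s : Finset ι) (v : n → ℂ)
    (w : ι → n → ℂ) : v ⬝ᵥ (∑ i ∈ s, w i) = ∑ i ∈ s, v ⬝ᵥ w i := by
  simp [dotProduct, Finset.mul_sum]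
  rw [Finset.sum_comm]

lemma quad_form {n : Type*} [Fintype n] (B : Matrix n n ℂ) (x : n → ℂ) :
    star x ⬝ᵥ ((Bᴴ * B) *ᵥ x) = ((∑ k, Complex.normSq ((B *ᵥ x) k) : ℝ) : ℂ) := by
  rw [← mulVec_mulVec, dotProduct_mulVec, ← star_mulVec]
  push_cast
  simp [dotProduct, Complex.normSq_eq_conj_mul_self, Complex.star_def]

lemma conj_quad_form {n m : Type*} [Fintype n] [Fintype m] (M : Matrix n n ℂ)
    (A : Matrix n m ℂ) (x : m → ℂ) :
    star x ⬝ᵥ ((Aᴴ * M * A) *ᵥ x) = star (A *ᵥ x) ⬝ᵥ (M *ᵥ (A *ᵥ x)) := by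
  rw [← mulVec_mulVec, ← mulVec_mulVec, dotProduct_mulVec, ← star_mulVec]

lemma kron_conjT {m n : Type*} (A : Matrix m m ℂ) (B : Matrix n n ℂ) :
    (A ⊗ₖ B)ᴴ = Aᴴ ⊗ₖ Bᴴ := by
  ext ⟨i, j⟩ ⟨k, l⟩
  simp [conjTranspose_apply, star_mul']

/-- partial trace over the second factor -/
noncomputable def ptA (ρ : Matrix (α × β) (α × β) ℂ) : Matrix α α ℂ :=
  Matrix.of fun m n => ∑ b, ρ (m, b) (n, b)

/-- partial trace over the first factor -/
noncomputable def ptB (ρ : Matrix (α × β) (α × β) ℂ) : Matrix β β ℂ :=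
  Matrix.of fun b b' => ∑ m, ρ (m, b) (m, b')

noncomputable def embA (b : β) : Matrix (α × β) α ℂ :=
  Matrix.of fun p n => if p = (n, b) then 1 else 0

noncomputable def embB (m : α) : Matrix (α × β) β ℂ :=
  Matrix.of fun p c => if p = (m, c) then 1 else 0

lemma conj_embA (M : Matrix (α × β) (α × β) ℂ) (b : β) :
    (embA (α := α) b)ᴴ * M * embA (α := α) b = Matrix.of fun m n => M (m, b) (n, b) := by
  ext m n
  simp [embA, mul_apply, conjTranspose_apply]

lemma conj_embB (M : Matrix (α × β) (α × β) ℂ) (m : α) :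
    (embB (β := β) m)ᴴ * M * embB (β := β) m = Matrix.of fun b b' => M (m, b) (m, b') := by
  ext b b'
  simp [embB, mul_apply, conjTranspose_apply]

lemma ptA_eq_sum (ρ : Matrix (α × β) (α × β) ℂ) :
    ptA ρ = ∑ b, (embA (α := α) (β := β) b)ᴴ * ρ * embA (α := α) (β := β) b := by
  ext m n
  simp [ptA, conj_embA, Matrix.sum_apply]

lemma ptB_eq_sum (ρ : Matrix (α × β) (α × β) ℂ) :
    ptB ρ = ∑ m, (embB (α := α) (β := β) m)ᴴ * ρ * embB (α := α) (β := β) m := by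
  ext b b'
  simp [ptB, conj_embB, Matrix.sum_apply]

lemma psd_sum {n ι : Type*} [Fintype n] (s : Finset ι) (f : ι → Matrix n n ℂ)
    (h : ∀ i ∈ s, (f i).PosSemidef) : (∑ i ∈ s, f i).PosSemidef := by
  classical
  induction s using Finset.induction with
  | empty => simpa using Matrix.PosSemidef.zero
  | insert _ _ hx ih =>
    rw [Finset.sum_insert hx]
    exact ((h _ (Finset.mem_insert_self _ _)).add
      (ih fun i hi => h i (Finset.mem_insert_of_mem hi)))

lemma ptA_psd {ρ : Matrix (α × β) (α × β) ℂ} (hρ : ρ.PosSemidef) : (ptA ρ).PosSemidef := by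
  rw [ptA_eq_sum]
  exact psd_sum _ _ fun b _ => hρ.conjTranspose_mul_mul_same _

lemma ptB_psd {ρ : Matrix (α × β) (α × β) ℂ} (hρ : ρ.PosSemidef) : (ptB ρ).PosSemidef := by
  rw [ptB_eq_sum]
  exact psd_sum _ _ fun m _ => hρ.conjTranspose_mul_mul_same _

noncomputable def G (m n : α) : Matrix (α × β) (α × β) ℂ :=
  (Matrix.of fun k l => if k = n ∧ l = m then (1 : ℂ) else 0) ⊗ₖ (1 : Matrix β β ℂ)

lemma conj_G (M : Matrix (α × β) (α × β) ℂ) (m n : α) :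
    (G m n)ᴴ * M * G m n = Matrix.of fun p q =>
      if p.1 = m ∧ q.1 = m then M (n, p.2) (n, q.2) else 0 := by
  ext ⟨a, c⟩ ⟨a', c'⟩
  simp only [G, mul_apply, conjTranspose_apply, kroneckerMap_apply, Matrix.of_apply,
    Fintype.sum_prod_type, one_apply]
  simp [star_mul', apply_ite, ite_and, Finset.sum_ite_eq, Finset.sum_ite_eq',
    mul_ite, ite_mul, mul_zero, zero_mul, mul_comm]
  split <;> simp_all

lemma one_kron_ptB (ρ : Matrix (α × β) (α × β) ℂ) :
    (1 : Matrix α α ℂ) ⊗ₖ ptB ρ = ∑ m, ∑ n, (G m n)ᴴ * ρ * G m n := by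
  ext ⟨a, c⟩ ⟨a', c'⟩
  simp only [Matrix.sum_apply, conj_G, Matrix.of_apply, kroneckerMap_apply, one_apply, ptB]
  by_cases h : a = a' <;> simp [h, eq_comm (a := a') (b := a), Finset.sum_ite_eq, ite_and]

lemma sum_G_diag : (∑ n : α, G (β := β) n n) = 1 := by
  ext ⟨a, c⟩ ⟨a', c'⟩
  simp only [Matrix.sum_apply, G, kroneckerMap_apply, Matrix.of_apply, one_apply, ite_and]
  by_cases h : a = a' <;> by_cases h2 : c = c' <;>
    simp [h, h2, Ne.symm, Finset.sum_ite_eq', Prod.ext_iff] <;> simp_all [eq_comm]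

lemma normSq_sum_le {ι : Type*} [Fintype ι] (z : ι → ℂ) :
    Complex.normSq (∑ i, z i) ≤ (Fintype.card ι : ℝ) * ∑ i, Complex.normSq (z i) := by
  calc Complex.normSq (∑ i, z i) = ‖∑ i, z i‖ ^ 2 := (Complex.sq_norm _).symm
    _ ≤ (∑ i, ‖z i‖) ^ 2 := by
        have h1 : ‖∑ i, z i‖ ≤ ∑ i, ‖z i‖ :=
          norm_sum_le _ _
        exact pow_le_pow_left₀ (norm_nonneg _) h1 2
    _ ≤ (Fintype.card ι : ℝ) * ∑ i, ‖z i‖ ^ 2 := by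
        simpa [Finset.card_univ] using
          sq_sum_le_card_mul_sum_sq (s := Finset.univ) (f := fun i => ‖z i‖)
    _ = (Fintype.card ι : ℝ) * ∑ i, Complex.normSq (z i) := by
        simp [Complex.sq_norm]

lemma key_psd (ρ : Matrix (α × β) (α × β) ℂ) (hρ : ρ.PosSemidef) :
    ((Fintype.card α : ℂ) • ((1 : Matrix α α ℂ) ⊗ₖ ptB ρ) - ρ).PosSemidef := by
  obtain ⟨B, hB⟩ := posSemidef_iff_eq_transpose_mul_self.mp hρ
  have hXpsd : ((1 : Matrix α α ℂ) ⊗ₖ ptB ρ).PosSemidef := by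
    rw [one_kron_ptB]
    exact psd_sum _ _ fun m _ => psd_sum _ _ fun n _ => hρ.conjTranspose_mul_mul_same _
  refine Matrix.PosSemidef.of_dotProduct_mulVec_nonneg ?_ ?_
  · show _ = _
    rw [conjTranspose_sub, conjTranspose_smul, hXpsd.1.eq, hρ.1.eq]
    norm_num
  · intro v
    rw [sub_mulVec, dotProduct_sub, smul_mulVec, dotProduct_smul]
    set w : α → α → (α × β) → ℂ := fun m n => B *ᵥ (G m n *ᵥ v) with hw
    have hX : star v ⬝ᵥ (((1 : Matrix α α ℂ) ⊗ₖ ptB ρ) *ᵥ v)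
        = ((∑ m, ∑ n, ∑ k, Complex.normSq (w m n k) : ℝ) : ℂ) := by
      rw [one_kron_ptB, mulVec_sumM, dotProduct_sumv]
      push_cast
      refine Finset.sum_congr rfl fun m _ => ?_
      rw [mulVec_sumM, dotProduct_sumv]
      push_cast
      refine Finset.sum_congr rfl fun n _ => ?_
      rw [conj_quad_form, hB, quad_form]
      push_cast
      rfl
    have hρv : star v ⬝ᵥ (ρ *ᵥ v) = ((∑ k, Complex.normSq ((B *ᵥ v) k) : ℝ) : ℂ) := by
      rw [hB, quad_form]
    have hv : B *ᵥ v = ∑ n, w n n := by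
      conv_lhs => rw [show v = (1 : Matrix (α × β) (α × β) ℂ) *ᵥ v from (one_mulVec v).symm,
        ← sum_G_diag, mulVec_sumM, mulVec_sumv]
    have hreal : (∑ k, Complex.normSq ((B *ᵥ v) k))
        ≤ (Fintype.card α : ℝ) * ∑ m, ∑ n, ∑ k, Complex.normSq (w m n k) := by
      have step1 : (∑ k, Complex.normSq ((B *ᵥ v) k))
          ≤ (Fintype.card α : ℝ) * ∑ n, ∑ k, Complex.normSq (w n n k) := by
        rw [hv, Finset.mul_sum]
        calc (∑ k, Complex.normSq ((∑ n, w n n) k))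
            = ∑ k, Complex.normSq (∑ n, w n n k) := by simp [Finset.sum_apply]
          _ ≤ ∑ k, (Fintype.card α : ℝ) * ∑ n, Complex.normSq (w n n k) :=
              Finset.sum_le_sum fun k _ => normSq_sum_le _
          _ = ∑ n, (Fintype.card α : ℝ) * ∑ k, Complex.normSq (w n n k) := by
              rw [← Finset.mul_sum, ← Finset.mul_sum, Finset.sum_comm]
      have step2 : (∑ n, ∑ k, Complex.normSq (w n n k))
          ≤ ∑ m, ∑ n, ∑ k, Complex.normSq (w m n k) := by
        calc (∑ n, ∑ k, Complex.normSq (w n n k))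
            ≤ ∑ n, ∑ m, ∑ k, Complex.normSq (w m n k) := by
              refine Finset.sum_le_sum fun n _ => ?_
              exact Finset.single_le_sum (f := fun m => ∑ k, Complex.normSq (w m n k))
                (fun m _ => Finset.sum_nonneg fun k _ => Complex.normSq_nonneg _)
                (Finset.mem_univ n)
          _ = ∑ m, ∑ n, ∑ k, Complex.normSq (w m n k) := Finset.sum_comm
      calc (∑ k, Complex.normSq ((B *ᵥ v) k))
          ≤ (Fintype.card α : ℝ) * ∑ n, ∑ k, Complex.normSq (w n n k) := step1
        _ ≤ (Fintype.card α : ℝ) * ∑ m, ∑ n, ∑ k, Complex.normSq (w m n k) := by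
            have : (0:ℝ) ≤ (Fintype.card α : ℝ) := by positivity
            exact mul_le_mul_of_nonneg_left step2 this
    rw [hX, hρv]
    have : ((Fintype.card α : ℂ)) • (((∑ m, ∑ n, ∑ k, Complex.normSq (w m n k) : ℝ)) : ℂ)
        - ((∑ k, Complex.normSq ((B *ᵥ v) k) : ℝ) : ℂ)
        = (((Fintype.card α : ℝ) * (∑ m, ∑ n, ∑ k, Complex.normSq (w m n k))
            - ∑ k, Complex.normSq ((B *ᵥ v) k) : ℝ) : ℂ) := by
      rw [smul_eq_mul]
      push_cast
      ring
    rw [this, Complex.zero_le_real]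
    linarith

lemma trace_psd_nonneg {n : Type*} [Fintype n] [DecidableEq n] {M : Matrix n n ℂ}
    (h : M.PosSemidef) : 0 ≤ M.trace := by
  rw [Matrix.trace]
  refine Finset.sum_nonneg fun i _ => ?_
  have h2 := h.dotProduct_mulVec_nonneg (Pi.single i 1)
  simpa [Matrix.mulVec_single, Matrix.diag, dotProduct, Pi.single_apply, apply_ite] using h2

lemma trace_conjT_mul_self {n : Type*} [Fintype n] (K : Matrix n n ℂ) :
    (Kᴴ * K).trace = ((∑ i, ∑ j, Complex.normSq (K i j) : ℝ) : ℂ) := by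
  push_cast
  simp only [Matrix.trace, Matrix.diag, mul_apply, conjTranspose_apply]
  rw [Finset.sum_comm]
  refine Finset.sum_congr rfl fun i _ => Finset.sum_congr rfl fun j _ => ?_
  rw [Complex.normSq_eq_conj_mul_self]
  rfl

lemma ptA_mul_kron_one (M : Matrix α α ℂ) (ρ : Matrix (α × β) (α × β) ℂ) :
    ptA ((M ⊗ₖ (1 : Matrix β β ℂ)) * ρ) = M * ptA ρ := by
  ext m n
  simp only [ptA, Matrix.of_apply, mul_apply, kroneckerMap_apply, one_apply,
    Fintype.sum_prod_type, mul_ite, ite_mul, mul_zero, zero_mul, mul_one,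
    Finset.sum_ite_eq, Finset.sum_ite_eq', Finset.mem_univ, if_true, Finset.mul_sum]
  rw [Finset.sum_comm]

lemma trace_ptA (ρ : Matrix (α × β) (α × β) ℂ) : (ptA ρ).trace = ρ.trace := by
  simp [Matrix.trace, ptA, Matrix.diag, Fintype.sum_prod_type]

lemma kron_one_psd {sA : Matrix α α ℂ} (h : sA.PosSemidef) :
    (sA ⊗ₖ (1 : Matrix β β ℂ)).PosSemidef := by
  obtain ⟨C, hC⟩ := posSemidef_iff_eq_transpose_mul_self.mp h
  have : sA ⊗ₖ (1 : Matrix β β ℂ) = (C ⊗ₖ (1 : Matrix β β ℂ))ᴴ * (C ⊗ₖ (1 : Matrix β β ℂ)) := by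
    rw [kron_conjT, conjTranspose_one, ← mul_kronecker_mul, ← hC, one_mul]
  rw [this]
  exact posSemidef_conjTranspose_mul_self _

end QPVAux

open scoped MatrixOrder in
noncomputable def Matrix.PosSemidef.sqrt {n : Type*} [Fintype n] [DecidableEq n] {A : Matrix n n ℂ}
    (_ : A.PosSemidef) : Matrix n n ℂ := CFC.sqrt A

open scoped MatrixOrder in
lemma Matrix.PosSemidef.posSemidef_sqrt {n : Type*} [Fintype n] [DecidableEq n] {A : Matrix n n ℂ}
    (hA : A.PosSemidef) : hA.sqrt.PosSemidef := (CFC.sqrt_nonneg A).posSemidef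

open scoped MatrixOrder in
lemma Matrix.PosSemidef.sqrt_mul_self {n : Type*} [Fintype n] [DecidableEq n] {A : Matrix n n ℂ}
    (hA : A.PosSemidef) : hA.sqrt * hA.sqrt = A := CFC.sqrt_mul_sqrt_self A hA.nonneg

open QPVAux
set_option maxHeartbeats 1000000

/-- A bipartite state is never orthogonal to the product of its marginals: for any density
matrix `ρ` on `α × β`, the overlap `Tr(ρ · (ρ_A ⊗ ρ_B))` has strictly positive real part. -/
theorem state_not_orthogonal_to_product_of_marginals {α β : Type*} [Fintype α] [Fintype β]
    [Nonempty α] [Nonempty β] [DecidableEq α] [DecidableEq β]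
    (ρ : Matrix (α × β) (α × β) ℂ) (hρ : ρ.PosSemidef) (htr : ρ.trace = 1) :
    0 < ((ρ * ((Matrix.of fun m n => ∑ b, ρ (m, b) (n, b)) ⊗ₖ
        (Matrix.of fun b b' => ∑ m, ρ (m, b) (m, b')))).trace).re := by
  show 0 < ((ρ * (ptA ρ ⊗ₖ ptB ρ)).trace).re
  have hρA := ptA_psd hρ
  set sA := hρA.sqrt with hsA_def
  have hsA : sA.PosSemidef := hρA.posSemidef_sqrt
  have hsA2 : sA * sA = ptA ρ := hρA.sqrt_mul_self
  set S : Matrix (α × β) (α × β) ℂ := sA ⊗ₖ (1 : Matrix β β ℂ) with hS_def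
  have hSH : Sᴴ = S := by rw [hS_def, kron_conjT, conjTranspose_one, hsA.1.eq]
  have hSpsd : S.PosSemidef := kron_one_psd hsA
  set r := hρ.sqrt with hr_def
  have hr : r.PosSemidef := hρ.posSemidef_sqrt
  have hrH : rᴴ = r := hr.1.eq
  have hr2 : r * r = ρ := hρ.sqrt_mul_self
  set τ : Matrix (α × β) (α × β) ℂ := ptA ρ ⊗ₖ ptB ρ with hτ_def
  have hτ : S * ((1 : Matrix α α ℂ) ⊗ₖ ptB ρ) * S = τ := by
    rw [hS_def, hτ_def, ← mul_kronecker_mul, ← mul_kronecker_mul]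
    simp [hsA2]
  set c : ℂ := (Fintype.card α : ℂ) with hc_def
  set K : Matrix (α × β) (α × β) ℂ := r * S * r with hK_def
  have hKH : Kᴴ = K := by
    rw [hK_def, conjTranspose_mul, conjTranspose_mul, hrH, hSH, mul_assoc]
  have hMpsd := key_psd ρ hρ
  have hPpsd : (r * (S * (c • ((1 : Matrix α α ℂ) ⊗ₖ ptB ρ) - ρ) * S) * r).PosSemidef := by
    have h1 := hMpsd.conjTranspose_mul_mul_same S
    rw [hSH] at h1
    have h2 := h1.conjTranspose_mul_mul_same r
    rwa [hrH] at h2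
  have htr0 := trace_psd_nonneg hPpsd
  have hexpand : r * (S * (c • ((1 : Matrix α α ℂ) ⊗ₖ ptB ρ) - ρ) * S) * r
      = c • (r * τ * r) - K * K := by
    have e1 : S * (c • ((1 : Matrix α α ℂ) ⊗ₖ ptB ρ) - ρ) * S
        = c • τ - S * ρ * S := by
      rw [mul_sub, sub_mul, mul_smul_comm, smul_mul_assoc, hτ]
    have e3 : r * (S * ρ * S) * r = K * K := by
      rw [hK_def, ← hr2]
      simp only [mul_assoc]
    rw [e1, mul_sub, sub_mul, mul_smul_comm, smul_mul_assoc, e3, mul_assoc]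
  have htr1 : (r * τ * r).trace = (ρ * τ).trace := by
    rw [trace_mul_cycle, hr2]
  have htr2 : (K * K).trace = ((∑ i, ∑ j, Complex.normSq (K i j) : ℝ) : ℂ) := by
    have e : Kᴴ * K = K * K := by rw [hKH]
    rw [← e, trace_conjT_mul_self]
  have hKne : K ≠ 0 := by
    intro h0
    have hT2 : hSpsd.sqrt * hSpsd.sqrt = S := hSpsd.sqrt_mul_self
    have hTH : (hSpsd.sqrt)ᴴ = hSpsd.sqrt := hSpsd.posSemidef_sqrt.1.eq
    have h1 : (hSpsd.sqrt * r)ᴴ * (hSpsd.sqrt * r) = 0 := by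
      rw [conjTranspose_mul, hTH, hrH]
      calc r * hSpsd.sqrt * (hSpsd.sqrt * r)
          = r * (hSpsd.sqrt * hSpsd.sqrt) * r := by simp only [mul_assoc]
        _ = K := by rw [hT2, hK_def]
        _ = 0 := h0
    have hTr : hSpsd.sqrt * r = 0 := Matrix.conjTranspose_mul_self_eq_zero.mp h1
    have hSr : S * r = 0 := by rw [← hT2, mul_assoc, hTr, mul_zero]
    have hSρ : S * ρ = 0 := by rw [← hr2, ← mul_assoc, hSr, zero_mul]
    have h2 : sA * ptA ρ = 0 := by
      rw [← ptA_mul_kron_one sA ρ, ← hS_def, hSρ]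
      ext m n
      simp [ptA]
    have h3 : sA * (sA * sA) = 0 := by rw [hsA2]; exact h2
    have h4 : (sA * sA)ᴴ * (sA * sA) = 0 := by
      rw [conjTranspose_mul, hsA.1.eq]
      calc sA * sA * (sA * sA) = sA * (sA * (sA * sA)) := by rw [mul_assoc]
        _ = sA * 0 := by rw [h3]
        _ = 0 := mul_zero _
    have h5 : sA * sA = 0 := Matrix.conjTranspose_mul_self_eq_zero.mp h4
    have h6 : (ptA ρ).trace = 0 := by rw [← hsA2, h5, trace_zero]
    rw [trace_ptA, htr] at h6
    exact one_ne_zero h6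
  have hcpos : 0 < (∑ i, ∑ j, Complex.normSq (K i j) : ℝ) := by
    obtain ⟨i, j, hij⟩ : ∃ i j, K i j ≠ 0 := by
      by_contra hno
      push_neg at hno
      exact hKne (by ext i j; simpa using hno i j)
    calc (0:ℝ) < Complex.normSq (K i j) := Complex.normSq_pos.mpr hij
      _ ≤ ∑ j, Complex.normSq (K i j) :=
          Finset.single_le_sum (fun _ _ => Complex.normSq_nonneg _) (Finset.mem_univ j)
      _ ≤ ∑ i, ∑ j, Complex.normSq (K i j) :=
          Finset.single_le_sum (f := fun i => ∑ j, Complex.normSq (K i j))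
            (fun _ _ => Finset.sum_nonneg fun _ _ => Complex.normSq_nonneg _)
            (Finset.mem_univ i)
  rw [hexpand, trace_sub, trace_smul, htr1, htr2] at htr0
  have hre := (Complex.le_def.mp htr0).1
  simp only [smul_eq_mul, Complex.zero_re, Complex.sub_re, Complex.mul_re, hc_def,
    Complex.natCast_re, Complex.natCast_im, Complex.ofReal_re, Complex.ofReal_im,
    zero_mul, sub_zero] at hre
  have hcard : 0 < (Fintype.card α : ℝ) := by
    have := Fintype.card_pos (α := α)
    exact_mod_cast this
  nlinarith [hre, hcpos, hcard]
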